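/- Let G be a finite simple graph, s, t vertices, and P, Q st-shortest paths in G. Let u and v be distinct adjacent vertices of G with N_G[u] = N_G[v] (true twins), such that u does not lie on P or on Q and u ∉ {s, t}. Then there exists a TJ-reconfiguration sequence from P to Q in G if and only if there exists a TJ-reconfiguration sequence from P to Q in the induced subgraph G − u. -/

import Mathlib

open SimpleGraph

/-- `W` is a shortest path from `s` to `t` in `G`: a path whose length (number of edges)
equals `dist_G(s,t)`. -/
def IsShortestSTPath {V : Type*} (G : SimpleGraph V) {s t : V} (W : G.Walk s t) : Prop :=
  W.IsPath ∧ W.length = G.dist s t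

/-- Two `st`-paths of the same length are TJ-adjacent if their vertex sequences differ
at exactly one position. -/
def TJAdjacent {V : Type*} (G : SimpleGraph V) {s t : V} (P Q : G.Walk s t) : Prop :=
  P.length = Q.length ∧ ∃! i : ℕ, P.getVert i ≠ Q.getVert i

/-- A TJ-reconfiguration sequence from `P` to `Q` of length `ℓ`: a sequence
`P = P_0, P_1, …, P_ℓ = Q` of `st`-shortest paths in which consecutive paths are
TJ-adjacent. -/
def TJSeq {V : Type*} (G : SimpleGraph V) {s t : V} (P Q : G.Walk s t) (ℓ : ℕ) : Prop :=
  ∃ f : ℕ → G.Walk s t, f 0 = P ∧ f ℓ = Q ∧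
    (∀ i ≤ ℓ, IsShortestSTPath G (f i)) ∧ ∀ i < ℓ, TJAdjacent G (f i) (f (i + 1))

namespace Stmt12Aux

open SimpleGraph Walk

variable {V : Type*} {G : SimpleGraph V}

lemma getVert_mem_support {a b : V} (p : G.Walk a b) (i : ℕ) : p.getVert i ∈ p.support := by
  induction p generalizing i with
  | nil => cases i <;> simp [Walk.getVert]
  | cons h q ih =>
    cases i with
    | zero => simp [Walk.getVert]
    | succ n =>
      rw [Walk.getVert_cons_succ]
      simp [ih n]

lemma getVert_map {W : Type*} {H : SimpleGraph W} (f : G →g H) {a b : V} (p : G.Walk a b)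
    (i : ℕ) : (p.map f).getVert i = f (p.getVert i) := by
  induction p generalizing i with
  | nil => cases i <;> rfl
  | cons h q ih =>
    cases i with
    | zero => rfl
    | succ n => simpa using ih n

lemma support_eq_map_getVert {a b : V} (p : G.Walk a b) :
    p.support = (List.range (p.length + 1)).map p.getVert := by
  induction p with
  | nil => simp [Walk.getVert]
  | cons h q ih =>
    have hfun : (Walk.cons h q).getVert ∘ Nat.succ = q.getVert := by
      funext n; exact Walk.getVert_cons_succ q h
    rw [Walk.support_cons, Walk.length_cons, ih]
    conv_rhs => rw [List.range_succ_eq_map]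
    rw [List.map_cons, List.map_map, hfun]
    simp [Walk.getVert_zero]

lemma walk_eq_of_support_eq {a b : V} (p : G.Walk a b) :
    ∀ q : G.Walk a b, p.support = q.support → p = q := by
  induction p with
  | nil =>
    intro q hq
    cases q with
    | nil => rfl
    | cons h' q' =>
      exfalso
      rw [Walk.support_nil, Walk.support_cons] at hq
      have := congrArg List.length hq
      simp at this
  | cons h p' ih =>
    rename_i a c b
    intro q hq
    cases q with
    | nil =>
      exfalso
      rw [Walk.support_nil, Walk.support_cons] at hq
      have := congrArg List.length hq
      simp at this
    | cons h' q' =>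
      rename_i c'
      rw [Walk.support_cons, Walk.support_cons] at hq
      have hq' : p'.support = q'.support := by
        injection hq
      have hc : c = c' := by
        have h1 := p'.support_eq_cons
        have h2 := q'.support_eq_cons
        rw [h1, h2] at hq'
        injection hq'
      subst hc
      obtain rfl := ih q' hq'
      rfl

lemma walk_eq_of_getVert_eq {a b : V} (p q : G.Walk a b) (hl : p.length = q.length)
    (h : ∀ i, p.getVert i = q.getVert i) : p = q := by
  apply walk_eq_of_support_eq
  rw [support_eq_map_getVert, support_eq_map_getVert, hl]
  exact List.map_congr_left fun i _ => h i

section Twins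

variable {u v : V}

/-- Replace `u` by `v`. -/
noncomputable def rr (u v x : V) : V := @ite _ (x = u) (Classical.dec _) v x

lemma rr_ne (huv : u ≠ v) (x : V) : rr u v x ≠ u := by
  unfold rr; split_ifs with h
  · exact huv.symm
  · exact h

lemma rr_mem (huv : u ≠ v) (x : V) : rr u v x ∈ ({u}ᶜ : Set V) := by
  simpa using rr_ne huv x

lemma rr_eq_of_ne {x : V} (hx : x ≠ u) : rr u v x = x := if_neg hx

lemma rr_adj (huv : u ≠ v)
    (htwin : ∀ w : V, (G.Adj u w ∨ w = u) ↔ (G.Adj v w ∨ w = v))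
    {a c : V} (h : G.Adj a c) (hac : a = u → c ≠ v) (hca : c = u → a ≠ v) :
    G.Adj (rr u v a) (rr u v c) := by
  unfold rr
  split_ifs with h1 h2 h2
  · exact absurd (h1 ▸ h2 ▸ h) (G.irrefl)
  · subst h1
    rcases (htwin c).mp (Or.inl h) with h' | h'
    · exact h'
    · exact absurd h' (hac rfl)
  · subst h2
    rcases (htwin a).mp (Or.inl h.symm) with h' | h'
    · exact h'.symm
    · exact absurd h' (hca rfl)
  · exact h

lemma shift_adj (huv : u ≠ v)
    (htwin : ∀ w : V, (G.Adj u w ∨ w = u) ↔ (G.Adj v w ∨ w = v))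
    {a c b : V} (h : G.Adj a c) (p : G.Walk c b)
    (hp : u ∈ (Walk.cons h p).support → v ∉ (Walk.cons h p).support) :
    (G.induce ({u}ᶜ : Set V)).Adj ⟨rr u v a, rr_mem huv a⟩ ⟨rr u v c, rr_mem huv c⟩ := by
  have hac : a = u → c ≠ v := by
    intro ha hc
    refine hp (by simp [ha]) ?_
    rw [Walk.support_cons, ← hc]
    exact List.mem_cons_of_mem _ p.start_mem_support
  have hca : c = u → a ≠ v := by
    intro hc ha
    refine hp ?_ (by simp [ha])
    rw [Walk.support_cons, ← hc]
    exact List.mem_cons_of_mem _ p.start_mem_support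
  exact rr_adj huv htwin h hac hca

/-- Shift a walk avoiding the `u`/`v` clash into the induced subgraph on `{u}ᶜ`,
replacing `u` by `v`. -/
noncomputable def shift (huv : u ≠ v)
    (htwin : ∀ w : V, (G.Adj u w ∨ w = u) ↔ (G.Adj v w ∨ w = v)) :
    ∀ {a b : V} (p : G.Walk a b), (u ∈ p.support → v ∉ p.support) →
      (G.induce ({u}ᶜ : Set V)).Walk ⟨rr u v a, rr_mem huv a⟩ ⟨rr u v b, rr_mem huv b⟩
  | _, _, Walk.nil, _ => Walk.nil
  | _, _, @Walk.cons _ _ a c b h p, hp =>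
      Walk.cons (shift_adj huv htwin h p hp)
        (shift huv htwin p fun h1 h2 => hp (by simp [h1]) (by simp [h2]))

lemma shift_cons (huv : u ≠ v)
    (htwin : ∀ w : V, (G.Adj u w ∨ w = u) ↔ (G.Adj v w ∨ w = v))
    {a c b : V} (h : G.Adj a c) (p : G.Walk c b)
    (hp : u ∈ (Walk.cons h p).support → v ∉ (Walk.cons h p).support) :
    shift huv htwin (Walk.cons h p) hp =
      Walk.cons (shift_adj huv htwin h p hp)
        (shift huv htwin p fun h1 h2 => hp (by simp [h1]) (by simp [h2])) := rfl

variable (huv : u ≠ v)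
    (htwin : ∀ w : V, (G.Adj u w ∨ w = u) ↔ (G.Adj v w ∨ w = v))

lemma length_shift {a b : V} (p : G.Walk a b) :
    ∀ hp, (shift huv htwin p hp).length = p.length := by
  induction p with
  | nil => intro hp; rfl
  | cons h q ih =>
    intro hp
    rw [shift_cons, Walk.length_cons, ih, Walk.length_cons]

lemma getVert_shift {a b : V} (p : G.Walk a b) :
    ∀ hp (i : ℕ), ((shift huv htwin p hp).getVert i).val = rr u v (p.getVert i) := by
  induction p with
  | nil => intro hp i; cases i <;> rfl
  | cons h q ih =>
    intro hp i
    cases i with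
    | zero =>
      rw [shift_cons]
      rfl
    | succ n =>
      rw [shift_cons, Walk.getVert_cons_succ, Walk.getVert_cons_succ]
      exact ih _ n

lemma support_shift {a b : V} (p : G.Walk a b) :
    ∀ hp, (shift huv htwin p hp).support.map Subtype.val = p.support.map (rr u v) := by
  induction p with
  | nil => intro hp; rfl
  | cons h q ih =>
    intro hp
    rw [shift_cons, Walk.support_cons, Walk.support_cons, List.map_cons, List.map_cons, ih]

lemma isPath_shift {a b : V} (p : G.Walk a b) (hP : p.IsPath) (hp) :
    (shift huv htwin p hp).IsPath := by
  rw [Walk.isPath_def]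
  have h1 : ((shift huv htwin p hp).support.map Subtype.val).Nodup := by
    rw [support_shift]
    refine List.Nodup.map_on ?_ hP.support_nodup
    intro x hx y hy hxy
    unfold rr at hxy
    split_ifs at hxy with hxu hyu hyu
    · exact hxu.trans hyu.symm
    · exact absurd hy (hxy ▸ hp (hxu ▸ hx))
    · exact absurd hx (hxy ▸ hp (hyu ▸ hy))
    · exact hxy
  exact h1.of_map _

/-- On a shortest path through `u` (with `u` internal), the true twin `v` cannot appear. -/
lemma not_both (htwin : ∀ w : V, (G.Adj u w ∨ w = u) ↔ (G.Adj v w ∨ w = v))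
    {s t : V} {W : G.Walk s t} (hadj : G.Adj u v)
    (hus : u ≠ s) (hut : u ≠ t)
    (hpath : W.IsPath) (hlen : W.length = G.dist s t) (hu : u ∈ W.support) :
    v ∉ W.support := by
  classical
  intro hv
  have huv : u ≠ v := hadj.ne
  set T := W.takeUntil u hu with hT
  set D := W.dropUntil u hu with hD
  have hspec : T.append D = W := W.take_spec hu
  have hlenTD : T.length + D.length = W.length := by
    rw [← hspec, Walk.length_append]
  have hsupp : W.support = T.support ++ D.support.tail := by
    rw [← hspec, Walk.support_append]
  have hnd : (T.support ++ D.support.tail).Nodup := by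
    rw [← hsupp]; exact hpath.support_nodup
  have hdisj : ∀ x, x ∈ T.support → x ∈ D.support.tail → False := by
    intro x h1 h2
    exact (List.disjoint_of_nodup_append hnd) h1 h2
  rcases List.mem_append.mp (hsupp ▸ hv) with hvT | hvD'
  · -- v on the first part; splice around u using the second edge of D
    have hDnil : ¬ D.Nil := by
      rw [Walk.nil_iff_length_eq]
      intro h
      exact hut (Walk.eq_of_length_eq_zero h)
    set y := D.getVert 1 with hy
    have hadj_uy : G.Adj u y := Walk.adj_snd hDnil
    have hDsupp : D.support.tail = D.tail.support := by
      have h1 := congrArg Walk.support (Walk.cons_tail_eq D hDnil)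
      rw [Walk.support_cons] at h1
      rw [← h1, List.tail_cons]
    have hy_tail : y ∈ D.support.tail := by
      rw [hDsupp]; exact Walk.start_mem_support _
    have hyv : y ≠ v := fun h => hdisj v hvT (h ▸ hy_tail)
    have hadj_vy : G.Adj v y := by
      rcases (htwin y).mp (Or.inl hadj_uy) with h' | h'
      · exact h'
      · exact absurd h' hyv
    set T₁ := T.takeUntil v hvT with hT₁
    have h2 : T₁.length + (T.dropUntil v hvT).length = T.length := by
      rw [← Walk.length_append, Walk.take_spec]
    have h3 : (T.dropUntil v hvT).length ≠ 0 := fun h =>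
      huv ((Walk.eq_of_length_eq_zero h).symm)
    have hDlen : D.tail.length + 1 = D.length := Walk.length_tail_add_one hDnil
    have hN := G.dist_le (T₁.append (Walk.cons hadj_vy D.tail))
    rw [Walk.length_append, Walk.length_cons] at hN
    omega
  · -- v on the second part; splice around u using the last edge of T
    have hvD : v ∈ D.support := List.mem_of_mem_tail hvD'
    have hvnT : v ∉ T.support := fun h => hdisj v h hvD'
    have hTnil : ¬ T.Nil := by
      rw [Walk.nil_iff_length_eq]
      intro h
      exact hus (Walk.eq_of_length_eq_zero h).symm
    have hRnil : ¬ T.reverse.Nil := by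
      rw [Walk.nil_iff_length_eq, Walk.length_reverse]
      rw [Walk.nil_iff_length_eq] at hTnil
      exact hTnil
    set x := T.reverse.getVert 1 with hx
    have hadj_ux : G.Adj u x := Walk.adj_snd hRnil
    have hx_mem : x ∈ T.support := by
      have := getVert_mem_support T.reverse 1
      rwa [Walk.support_reverse, List.mem_reverse] at this
    have hxv : x ≠ v := fun h => hvnT (h ▸ hx_mem)
    have hadj_xv : G.Adj x v := by
      rcases (htwin x).mp (Or.inl hadj_ux) with h' | h'
      · exact h'.symm
      · exact absurd h' hxv
    set D₂ := D.dropUntil v hvD with hD₂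
    have h2 : (D.takeUntil v hvD).length + D₂.length = D.length := by
      rw [← Walk.length_append, Walk.take_spec]
    have h3 : (D.takeUntil v hvD).length ≠ 0 := fun h =>
      huv (Walk.eq_of_length_eq_zero h)
    have hTlen : T.reverse.tail.length + 1 = T.reverse.length :=
      Walk.length_tail_add_one hRnil
    rw [Walk.length_reverse] at hTlen
    have hN := G.dist_le ((T.reverse.tail.reverse).append (Walk.cons hadj_xv D₂))
    rw [Walk.length_append, Walk.length_cons, Walk.length_reverse] at hN
    omega

end Twins

/-- Collapse a "lax" TJ sequence (consecutive walks equal or TJ-adjacent) into a genuine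
TJ sequence. -/
lemma tjseq_of_lax {V' : Type*} (H : SimpleGraph V') {s' t' : V'} :
    ∀ (ℓ : ℕ) (f : ℕ → H.Walk s' t'),
      (∀ i ≤ ℓ, IsShortestSTPath H (f i)) →
      (∀ i < ℓ, f i = f (i + 1) ∨ TJAdjacent H (f i) (f (i + 1))) →
      ∃ ℓ', TJSeq H (f 0) (f ℓ) ℓ' := by
  intro ℓ
  induction ℓ with
  | zero =>
    intro f hs _
    exact ⟨0, fun _ => f 0, rfl, rfl, fun i _ => hs 0 le_rfl,
      fun i hi => absurd hi (by omega)⟩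
  | succ ℓ ih =>
    intro f hs ha
    obtain ⟨ℓ', g, hg0, hgl, hgs, hga⟩ :=
      ih f (fun i hi => hs i (hi.trans (Nat.le_succ ℓ)))
        (fun i hi => ha i (hi.trans (Nat.lt_succ_self ℓ)))
    rcases ha ℓ (Nat.lt_succ_self ℓ) with heq | hadj
    · exact ⟨ℓ', g, hg0, by rw [hgl, heq], hgs, hga⟩
    · refine ⟨ℓ' + 1, fun i => if i ≤ ℓ' then g i else f (ℓ + 1), ?_, ?_, ?_, ?_⟩
      · simp [hg0]
      · simp
      · intro i hi
        by_cases hii : i ≤ ℓ'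
        · simpa [hii] using hgs i hii
        · simpa [hii] using hs (ℓ + 1) le_rfl
      · intro i hi
        by_cases hii : i < ℓ'
        · have h2 : i + 1 ≤ ℓ' := hii
          simpa [hii.le, h2] using hga i hii
        · have hieq : i = ℓ' := by omega
          subst hieq
          simpa [hgl] using hadj

end Stmt12Aux

open Stmt12Aux

/-- Let `u, v` be true twins (distinct, adjacent, with the same closed
neighborhoods), where `u` lies neither on `P` nor on `Q` and `u ∉ {s, t}`. Then there is a
TJ-reconfiguration sequence from `P` to `Q` in `G` iff there is one in the induced subgraph
`G − u` (between the copies of `P` and `Q` in `G − u`). -/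
theorem stmt_12 {V : Type*} [Fintype V] (G : SimpleGraph V) (s t : V)
    (P Q : G.Walk s t) (hP : IsShortestSTPath G P) (hQ : IsShortestSTPath G Q)
    (u v : V) (huv : u ≠ v) (hadj : G.Adj u v)
    (htwin : ∀ w : V, (G.Adj u w ∨ w = u) ↔ (G.Adj v w ∨ w = v))
    (huP : u ∉ P.support) (huQ : u ∉ Q.support) (hus : u ≠ s) (hut : u ≠ t) :
    (∃ ℓ : ℕ, TJSeq G P Q ℓ) ↔
      ∃ (hs : s ∈ ({u}ᶜ : Set V)) (ht : t ∈ ({u}ᶜ : Set V))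
        (P' Q' : (G.induce ({u}ᶜ : Set V)).Walk ⟨s, hs⟩ ⟨t, ht⟩),
        P'.support.map Subtype.val = P.support ∧
        Q'.support.map Subtype.val = Q.support ∧
        ∃ ℓ : ℕ, TJSeq (G.induce ({u}ᶜ : Set V)) P' Q' ℓ := by
  classical
  have hs : s ∈ ({u}ᶜ : Set V) := by simp [Ne.symm hus]
  have ht : t ∈ ({u}ᶜ : Set V) := by simp [Ne.symm hut]
  set S : Set V := ({u}ᶜ : Set V) with hS
  -- the embedding of the induced subgraph back into `G`
  let ι : G.induce S →g G := (SimpleGraph.Embedding.induce S).toHom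
  have hιval : ∀ x : S, ι x = x.val := fun _ => rfl
  have hinj : Function.Injective ι := fun a b h => Subtype.ext h
  have hrs : (⟨rr u v s, rr_mem huv s⟩ : S) = ⟨s, hs⟩ :=
    Subtype.ext (rr_eq_of_ne (Ne.symm hus))
  have hrt : (⟨rr u v t, rr_mem huv t⟩ : S) = ⟨t, ht⟩ :=
    Subtype.ext (rr_eq_of_ne (Ne.symm hut))
  -- the canonical shifting of an `st`-walk missing the `u,v` clash
  let Φ : ∀ (W : G.Walk s t), (u ∈ W.support → v ∉ W.support) →
      (G.induce S).Walk ⟨s, hs⟩ ⟨t, ht⟩ :=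
    fun W hw => (shift huv htwin W hw).copy hrs hrt
  have hΦlen : ∀ W hw, (Φ W hw).length = W.length := by
    intro W hw
    simp only [Φ, Walk.length_copy]
    exact length_shift huv htwin W hw
  have hΦget : ∀ W hw i, ((Φ W hw).getVert i).val = rr u v (W.getVert i) := by
    intro W hw i
    simp only [Φ, Walk.getVert_copy]
    exact getVert_shift huv htwin W hw i
  have hΦsupp : ∀ W hw, (Φ W hw).support.map Subtype.val = W.support.map (rr u v) := by
    intro W hw
    simp only [Φ, Walk.support_copy]
    exact support_shift huv htwin W hw
  have hpP : u ∈ P.support → v ∉ P.support := fun h => absurd h huP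
  -- the distance is unchanged
  have hdist : (G.induce S).dist ⟨s, hs⟩ ⟨t, ht⟩ = G.dist s t := by
    apply le_antisymm
    · have := (G.induce S).dist_le (Φ P hpP)
      rwa [hΦlen, hP.2] at this
    · have hreach : (G.induce S).Reachable ⟨s, hs⟩ ⟨t, ht⟩ := ⟨Φ P hpP⟩
      obtain ⟨W', hW'⟩ := hreach.exists_walk_length_eq_dist
      have := G.dist_le (W'.map ι)
      rwa [Walk.length_map, hW'] at this
  -- the support of a shifted `u`-free walk is unchanged
  have hΦsupp_id : ∀ (W : G.Walk s t) (hW : u ∉ W.support) hw,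
      (Φ W hw).support.map Subtype.val = W.support := by
    intro W hW hw
    have h1 : W.support.map (rr u v) = W.support.map id :=
      List.map_congr_left fun x hx => rr_eq_of_ne (fun h => hW (h ▸ hx))
    rw [hΦsupp, h1, List.map_id]
  constructor
  · -- forward direction
    rintro ⟨ℓ, f, hf0, hfl, hfs, hfa⟩
    have hclash : ∀ i (h : i ≤ ℓ), u ∈ (f i).support → v ∉ (f i).support := by
      intro i h
      exact fun hui => not_both htwin hadj hus hut (hfs i h).1 (hfs i h).2 hui
    let g : ℕ → (G.induce S).Walk ⟨s, hs⟩ ⟨t, ht⟩ :=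
      fun i => if h : i ≤ ℓ then Φ (f i) (hclash i h) else Φ P hpP
    have hg : ∀ i (h : i ≤ ℓ), g i = Φ (f i) (hclash i h) := by
      intro i h; simp only [g, dif_pos h]
    refine ⟨hs, ht, g 0, g ℓ, ?_, ?_, ?_⟩
    · rw [hg 0 (Nat.zero_le ℓ)]
      have h1 : u ∉ (f 0).support := hf0 ▸ huP
      rw [hΦsupp_id (f 0) h1, hf0]
    · rw [hg ℓ le_rfl]
      have h1 : u ∉ (f ℓ).support := hfl ▸ huQ
      rw [hΦsupp_id (f ℓ) h1, hfl]
    · -- build a lax sequence, then collapse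
      apply tjseq_of_lax (G.induce S) ℓ g
      · intro i hi
        rw [hg i hi]
        constructor
        · simpa only [Φ, Walk.isPath_copy] using isPath_shift huv htwin (f i) (hfs i hi).1 _
        · rw [hΦlen, (hfs i hi).2, hdist]
      · intro i hi
        rw [hg i hi.le, hg (i + 1) hi]
        obtain ⟨hlen, k₀, hk₀, huniq⟩ := hfa i hi
        by_cases hall : ∀ j, rr u v ((f i).getVert j) = rr u v ((f (i + 1)).getVert j)
        · left
          apply walk_eq_of_getVert_eq
          · rw [hΦlen, hΦlen, hlen]
          · intro j
            apply Subtype.ext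
            rw [hΦget, hΦget]
            exact hall j
        · right
          push_neg at hall
          obtain ⟨j₀, hj₀⟩ := hall
          constructor
          · rw [hΦlen, hΦlen, hlen]
          · have hkey : ∀ j, ((Φ (f i) (hclash i hi.le)).getVert j ≠
                (Φ (f (i + 1)) (hclash (i + 1) hi)).getVert j) ↔
                rr u v ((f i).getVert j) ≠ rr u v ((f (i + 1)).getVert j) := by
              intro j
              rw [← hΦget (f i) (hclash i hi.le) j, ← hΦget (f (i + 1)) (hclash (i + 1) hi) j]
              constructor
              · intro h hc
                exact h (Subtype.ext hc)
              · intro h hc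
                exact h (congrArg Subtype.val hc)
            have hj₀k₀ : j₀ = k₀ := by
              apply huniq
              intro hc
              exact hj₀ (by rw [hc])
            refine ⟨j₀, (hkey j₀).mpr hj₀, ?_⟩
            intro j hj
            have : rr u v ((f i).getVert j) ≠ rr u v ((f (i + 1)).getVert j) := (hkey j).mp hj
            have hjne : (f i).getVert j ≠ (f (i + 1)).getVert j := fun hc => this (by rw [hc])
            rw [huniq j hjne, ← hj₀k₀]
  · -- backward direction
    rintro ⟨hs', ht', P', Q', hPs, hQs, ℓ, f', h0, hl, hsrt, hadjs⟩
    have hP'coe : ∀ (W : (G.induce S).Walk ⟨s, hs'⟩ ⟨t, ht'⟩),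
        (W.map ι).support = W.support.map Subtype.val := by
      intro W
      rw [Walk.support_map]
      rfl
    refine ⟨ℓ, fun i => (f' i).map ι, ?_, ?_, ?_, ?_⟩
    · show (f' 0).map ι = P
      rw [h0]
      apply walk_eq_of_support_eq
      rw [hP'coe, hPs]
      rfl
    · show (f' ℓ).map ι = Q
      rw [hl]
      apply walk_eq_of_support_eq
      rw [hP'coe, hQs]
      rfl
    · intro i hi
      obtain ⟨hp1, hp2⟩ := hsrt i hi
      constructor
      · exact Walk.map_isPath_of_injective hinj hp1
      · exact (Walk.length_map ι (f' i)).trans (hp2.trans hdist)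
    · intro i hi
      obtain ⟨hlen, k₀, hk₀, huniq⟩ := hadjs i hi
      constructor
      · exact (Walk.length_map ι (f' i)).trans (hlen.trans (Walk.length_map ι (f' (i + 1))).symm)
      · refine ⟨k₀, ?_, ?_⟩
        · show ((f' i).map ι).getVert k₀ ≠ ((f' (i + 1)).map ι).getVert k₀
          rw [getVert_map, getVert_map]
          intro hc
          exact hk₀ (hinj hc)
        · intro j hj
          have hj' : ((f' i).map ι).getVert j ≠ ((f' (i + 1)).map ι).getVert j := hj
          rw [getVert_map, getVert_map] at hj'
          exact huniq j fun hc => hj' (by rw [hc])
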